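/- There exists a sequence of K_{2,2}-free bipartite graphs (G_n) where G_n has 2n^n vertices and every vertex has degree exactly n; consequently any hereditary class containing all G_n has unbounded functionality. -/

import Mathlib

open Finset
open scoped Classical

variable {V : Type*}

/-- A vertex `x` is a function of a set `S` of other vertices: there is a Boolean
function `f` such that for every vertex `z` outside `S ∪ {x}`, adjacency of `z`
to `x` is `f` of the adjacencies of `z` to the members of `S`. -/
def IsFunctionOf (G : SimpleGraph V) (x : V) (S : Finset V) : Prop :=
  x ∉ S ∧ ∃ f : (S → Prop) → Prop,
    ∀ z, z ≠ x → z ∉ S → (G.Adj x z ↔ f fun s => G.Adj z s)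

/-- The functionality of a vertex: minimum `k` such that `x` is a function of
`k` other vertices. -/
noncomputable def funVertex [Fintype V] (G : SimpleGraph V) (x : V) : ℕ :=
  sInf {k | ∃ S : Finset V, S.card = k ∧ IsFunctionOf G x S}

/-- `sdPair G x y`: the number of vertices other than `x, y` adjacent to exactly
one of `x` and `y`. -/
noncomputable def sdPair [Fintype V] (G : SimpleGraph V) (x y : V) : ℕ :=
  (univ.filter fun z => z ≠ x ∧ z ≠ y ∧ ¬(G.Adj z x ↔ G.Adj z y)).card

namespace K22Aux

lemma pow_self_ne_zero (n : ℕ) : n ^ n ≠ 0 := by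
  cases n with
  | zero => simp
  | succ m => exact pow_ne_zero _ (Nat.succ_ne_zero m)

noncomputable instance (n : ℕ) : NeZero (n ^ n) := ⟨pow_self_ne_zero n⟩

lemma modeq_eq {m a b : ℕ} (h : a ≡ b [MOD m]) (ha0 : 0 < a) (hb0 : 0 < b)
    (ha : a ≤ m) (hb : b ≤ m) : a = b := by
  rcases le_total a b with hab | hab
  · have hd : m ∣ b - a := (Nat.modEq_iff_dvd' hab).mp h
    rcases Nat.eq_zero_or_pos (b - a) with h0 | h0
    · omega
    · have := Nat.le_of_dvd h0 hd; omega
  · have hd : m ∣ a - b := (Nat.modEq_iff_dvd' hab).mp h.symm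
    rcases Nat.eq_zero_or_pos (a - b) with h0 | h0
    · omega
    · have := Nat.le_of_dvd h0 hd; omega

/-- Uniqueness of two-term base-`n` representations. -/
lemma key {n : ℕ} (hn : 2 ≤ n) :
    ∀ i l j k : ℕ, n ^ i + n ^ l = n ^ j + n ^ k →
      (i = j ∧ l = k) ∨ (i = k ∧ l = j) := by
  intro i
  induction i with
  | zero =>
    intro l j k h
    rcases j with _ | j
    · have h' : n ^ l = n ^ k := by simpa using h
      exact Or.inl ⟨rfl, Nat.pow_right_injective hn h'⟩
    · rcases k with _ | k
      · have h' : n ^ l = n ^ (j + 1) := by simp only [pow_zero] at h; omega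
        exact Or.inr ⟨rfl, Nat.pow_right_injective hn h'⟩
      · rcases l with _ | l
        · have h1 : n ≤ n ^ (j + 1) := Nat.le_self_pow (Nat.succ_ne_zero j) n
          have h2 : n ≤ n ^ (k + 1) := Nat.le_self_pow (Nat.succ_ne_zero k) n
          simp only [pow_zero] at h; omega
        · have d1 : n ∣ n ^ (l + 1) := dvd_pow_self n (Nat.succ_ne_zero l)
          have d2 : n ∣ n ^ (j + 1) := dvd_pow_self n (Nat.succ_ne_zero j)
          have d3 : n ∣ n ^ (k + 1) := dvd_pow_self n (Nat.succ_ne_zero k)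
          have h2 : n ∣ 1 + n ^ (l + 1) := by
            simp only [pow_zero] at h; rw [h]; exact dvd_add d2 d3
          have h3 : n ∣ 1 := by
            have := Nat.dvd_sub h2 d1; simpa using this
          have := Nat.le_of_dvd one_pos h3; omega
  | succ i ih =>
    intro l j k h
    rcases j with _ | j
    · rcases l with _ | l
      · have h' : n ^ (i + 1) = n ^ k := by simp only [pow_zero] at h; omega
        exact Or.inr ⟨Nat.pow_right_injective hn h', rfl⟩
      · rcases k with _ | k
        · have h1 : n ≤ n ^ (i + 1) := Nat.le_self_pow (Nat.succ_ne_zero i) n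
          have h2 : n ≤ n ^ (l + 1) := Nat.le_self_pow (Nat.succ_ne_zero l) n
          simp only [pow_zero] at h; omega
        · have d1 : n ∣ n ^ (i + 1) := dvd_pow_self n (Nat.succ_ne_zero i)
          have d2 : n ∣ n ^ (l + 1) := dvd_pow_self n (Nat.succ_ne_zero l)
          have d3 : n ∣ n ^ (k + 1) := dvd_pow_self n (Nat.succ_ne_zero k)
          have h2 : n ∣ 1 + n ^ (k + 1) := by
            simp only [pow_zero] at h; rw [← h]; exact dvd_add d1 d2
          have h3 : n ∣ 1 := by
            have := Nat.dvd_sub h2 d3; simpa using this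
          have := Nat.le_of_dvd one_pos h3; omega
    · rcases k with _ | k
      · rcases l with _ | l
        · have h' : n ^ (i + 1) = n ^ (j + 1) := by simp only [pow_zero] at h; omega
          exact Or.inl ⟨Nat.pow_right_injective hn h', rfl⟩
        · have d1 : n ∣ n ^ (i + 1) := dvd_pow_self n (Nat.succ_ne_zero i)
          have d2 : n ∣ n ^ (l + 1) := dvd_pow_self n (Nat.succ_ne_zero l)
          have d3 : n ∣ n ^ (j + 1) := dvd_pow_self n (Nat.succ_ne_zero j)
          have h2 : n ∣ n ^ (j + 1) + 1 := by
            simp only [pow_zero] at h; rw [← h]; exact dvd_add d1 d2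
          have h3 : n ∣ 1 := by
            have := Nat.dvd_sub h2 d3; simpa using this
          have := Nat.le_of_dvd one_pos h3; omega
      · rcases l with _ | l
        · have d1 : n ∣ n ^ (i + 1) := dvd_pow_self n (Nat.succ_ne_zero i)
          have d2 : n ∣ n ^ (j + 1) := dvd_pow_self n (Nat.succ_ne_zero j)
          have d3 : n ∣ n ^ (k + 1) := dvd_pow_self n (Nat.succ_ne_zero k)
          have h2 : n ∣ n ^ (i + 1) + 1 := by
            simp only [pow_zero] at h; rw [h]; exact dvd_add d2 d3
          have h3 : n ∣ 1 := by
            have := Nat.dvd_sub h2 d1; simpa using this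
          have := Nat.le_of_dvd one_pos h3; omega
        · have h' : n * (n ^ i + n ^ l) = n * (n ^ j + n ^ k) := by
            simp only [pow_succ] at h; ring_nf; ring_nf at h; linarith
          have he : n ^ i + n ^ l = n ^ j + n ^ k :=
            Nat.eq_of_mul_eq_mul_left (by omega) h'
          rcases ih l j k he with ⟨h1, h2⟩ | ⟨h1, h2⟩
          · exact Or.inl ⟨by omega, by omega⟩
          · exact Or.inr ⟨by omega, by omega⟩

/-- The "Sidon" elements `n^i` of `ZMod (n^n)`. -/
def cpow (n : ℕ) (i : Fin n) : ZMod (n ^ n) := ((n ^ (i : ℕ) : ℕ) : ZMod (n ^ n))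

lemma cpow_inj (n : ℕ) : Function.Injective (cpow n) := by
  intro i j h
  by_cases hn : n ≤ 1
  · have := i.isLt; have := j.isLt
    exact Fin.ext (by omega)
  · push_neg at hn
    have hn2 : 2 ≤ n := hn
    have hm : (n ^ (i : ℕ)) ≡ (n ^ (j : ℕ)) [MOD n ^ n] :=
      (ZMod.natCast_eq_natCast_iff _ _ _).mp h
    have hp : ∀ a : Fin n, 0 < n ^ (a : ℕ) := fun a => Nat.pow_pos (by omega)
    have hle : ∀ a : Fin n, n ^ (a : ℕ) ≤ n ^ n :=
      fun a => Nat.pow_le_pow_right (by omega) (le_of_lt a.isLt)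
    have := modeq_eq hm (hp i) (hp j) (hle i) (hle j)
    exact Fin.ext (Nat.pow_right_injective hn2 this)

lemma cpow_sidon {n : ℕ} (hn : 2 ≤ n) {i l j k : Fin n}
    (h : cpow n i + cpow n l = cpow n j + cpow n k) :
    (i = j ∧ l = k) ∨ (i = k ∧ l = j) := by
  have h' : (((n ^ (i : ℕ) + n ^ (l : ℕ) : ℕ)) : ZMod (n ^ n))
      = (((n ^ (j : ℕ) + n ^ (k : ℕ) : ℕ)) : ZMod (n ^ n)) := by
    push_cast
    simpa [cpow] using h
  have hm := (ZMod.natCast_eq_natCast_iff _ _ _).mp h'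
  have hle : ∀ a : Fin n, n ^ (a : ℕ) ≤ n ^ (n - 1) :=
    fun a => Nat.pow_le_pow_right (by omega) (by have := a.isLt; omega)
  have hbound : 2 * n ^ (n - 1) ≤ n ^ n := by
    calc 2 * n ^ (n - 1) ≤ n * n ^ (n - 1) := Nat.mul_le_mul_right _ hn
    _ = n ^ n := by
        rw [← pow_succ']
        congr 1
        omega
  have hp : ∀ a : Fin n, 0 < n ^ (a : ℕ) := fun a => Nat.pow_pos (by omega)
  have heq : n ^ (i : ℕ) + n ^ (l : ℕ) = n ^ (j : ℕ) + n ^ (k : ℕ) := by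
    apply modeq_eq hm
    · have := hp i; have := hp l; omega
    · have := hp j; have := hp k; omega
    · have := hle i; have := hle l; omega
    · have := hle j; have := hle k; omega
  rcases key hn _ _ _ _ heq with ⟨h1, h2⟩ | ⟨h1, h2⟩
  · exact Or.inl ⟨Fin.ext h1, Fin.ext h2⟩
  · exact Or.inr ⟨Fin.ext h1, Fin.ext h2⟩

/-- One-directional adjacency relation. -/
def rel (n : ℕ) (f g : ZMod (n ^ n)) : Prop := ∃ i : Fin n, g = f + cpow n i

/-- The bipartite graph on `ZMod (n^n) ⊕ ZMod (n^n)` given by `f ~ g` iff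
`g = f + n^i` for some `i < n`. -/
def HG (n : ℕ) : SimpleGraph (ZMod (n ^ n) ⊕ ZMod (n ^ n)) where
  Adj a b := match a, b with
    | Sum.inl f, Sum.inr g => rel n f g
    | Sum.inr g, Sum.inl f => rel n f g
    | _, _ => False
  symm := ⟨by rintro (f | f) (g | g) h <;> exact h⟩
  loopless := ⟨by rintro (f | f) h <;> exact h⟩

@[simp] lemma HG_adj_lr {n : ℕ} (f g : ZMod (n ^ n)) :
    (HG n).Adj (Sum.inl f) (Sum.inr g) ↔ rel n f g := Iff.rfl
@[simp] lemma HG_adj_rl {n : ℕ} (f g : ZMod (n ^ n)) :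
    (HG n).Adj (Sum.inr g) (Sum.inl f) ↔ rel n f g := Iff.rfl
@[simp] lemma HG_adj_ll {n : ℕ} (f g : ZMod (n ^ n)) :
    ¬ (HG n).Adj (Sum.inl f) (Sum.inl g) := fun h => h
@[simp] lemma HG_adj_rr {n : ℕ} (f g : ZMod (n ^ n)) :
    ¬ (HG n).Adj (Sum.inr f) (Sum.inr g) := fun h => h

lemma nb_inl (n : ℕ) (f : ZMod (n ^ n)) :
    (HG n).neighborFinset (Sum.inl f)
      = (univ : Finset (Fin n)).image (fun i => Sum.inr (f + cpow n i)) := by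
  ext b
  rcases b with g | g
  · simp [SimpleGraph.mem_neighborFinset]
  · simp [SimpleGraph.mem_neighborFinset, rel, eq_comm]

lemma nb_inr (n : ℕ) (g : ZMod (n ^ n)) :
    (HG n).neighborFinset (Sum.inr g)
      = (univ : Finset (Fin n)).image (fun i => Sum.inl (g - cpow n i)) := by
  ext b
  rcases b with f | f
  · simp only [SimpleGraph.mem_neighborFinset, HG_adj_rl, rel, mem_image, mem_univ,
      true_and]
    constructor
    · rintro ⟨i, hi⟩; exact ⟨i, by rw [hi]; ring_nf⟩
    · rintro ⟨i, hi⟩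
      have hf : g - cpow n i = f := Sum.inl.inj hi
      exact ⟨i, by rw [← hf]; ring⟩
  · simp [SimpleGraph.mem_neighborFinset]

lemma HG_degree (n : ℕ) (v : ZMod (n ^ n) ⊕ ZMod (n ^ n)) :
    (HG n).degree v = n := by
  rcases v with f | g
  · rw [SimpleGraph.degree, nb_inl]
    rw [Finset.card_image_of_injective _
      (fun i j h => cpow_inj n (by
        have := Sum.inr.inj h
        exact add_left_cancel this))]
    simp
  · rw [SimpleGraph.degree, nb_inr]
    rw [Finset.card_image_of_injective _
      (fun i j h => cpow_inj n (by
        have h2 := Sum.inl.inj h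
        linear_combination -h2))]
    simp

lemma HG_common (n : ℕ) (a b : ZMod (n ^ n) ⊕ ZMod (n ^ n)) (hab : a ≠ b) :
    ((HG n).neighborFinset a ∩ (HG n).neighborFinset b).card < 2 := by
  by_contra hcon
  push_neg at hcon
  obtain ⟨x, hx, y, hy, hxy⟩ := Finset.one_lt_card.mp hcon
  rw [mem_inter, SimpleGraph.mem_neighborFinset, SimpleGraph.mem_neighborFinset] at hx hy
  rcases a with f | f <;> rcases b with f' | f'
  · rcases x with g | g
    · exact HG_adj_ll _ _ hx.1
    rcases y with g' | g'
    · exact HG_adj_ll _ _ hy.1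
    have hgg' : g ≠ g' := fun h => hxy (by rw [h])
    have hff' : f ≠ f' := fun h => hab (by rw [h])
    obtain ⟨i, hi⟩ := hx.1
    obtain ⟨j, hj⟩ := hx.2
    obtain ⟨k, hk⟩ := hy.1
    obtain ⟨l, hl⟩ := hy.2
    by_cases hn : n ≤ 1
    · have hik : i = k := Fin.ext (by have := i.isLt; have := k.isLt; omega)
      subst hik
      exact hgg' (by rw [hi, hk])
    · push_neg at hn
      have hsum : cpow n i + cpow n l = cpow n j + cpow n k := by
        linear_combination -hi + hj + hk - hl
      rcases cpow_sidon hn hsum with ⟨h1, h2⟩ | ⟨h1, h2⟩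
      · subst h1
        exact hff' (by linear_combination hj - hi)
      · subst h1
        exact hgg' (by rw [hi, hk])
  · rcases x with g | g
    · exact HG_adj_ll _ _ hx.1
    · exact HG_adj_rr _ _ hx.2
  · rcases x with g | g
    · exact HG_adj_ll _ _ hx.2
    · exact HG_adj_rr _ _ hx.1
  · rcases x with g | g
    swap
    · exact HG_adj_rr _ _ hx.1
    rcases y with g' | g'
    swap
    · exact HG_adj_rr _ _ hy.1
    have hgg' : g ≠ g' := fun h => hxy (by rw [h])
    have hff' : f ≠ f' := fun h => hab (by rw [h])
    obtain ⟨i, hi⟩ := hx.1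
    obtain ⟨j, hj⟩ := hx.2
    obtain ⟨k, hk⟩ := hy.1
    obtain ⟨l, hl⟩ := hy.2
    by_cases hn : n ≤ 1
    · have hij : i = j := Fin.ext (by have := i.isLt; have := j.isLt; omega)
      subst hij
      exact hff' (by linear_combination hi - hj)
    · push_neg at hn
      have hsum : cpow n i + cpow n l = cpow n j + cpow n k := by
        linear_combination -hi + hj + hk - hl
      rcases cpow_sidon hn hsum with ⟨h1, h2⟩ | ⟨h1, h2⟩
      · subst h1
        exact hff' (by linear_combination hi - hj)
      · subst h1
        exact hgg' (by linear_combination hk - hi)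

lemma HG_colorable (n : ℕ) : (HG n).Colorable 2 :=
  ⟨SimpleGraph.Coloring.mk (Sum.elim (fun _ => (0 : Fin 2)) (fun _ => (1 : Fin 2)))
    (by rintro (f | f) (g | g) h <;> simp_all)⟩

lemma comap_degree {V W : Type*} [Fintype V] [Fintype W] (e : V ≃ W)
    (H : SimpleGraph W) (a : V) :
    (H.comap e).degree a = H.degree (e a) := by
  unfold SimpleGraph.degree
  apply Finset.card_bij' (fun b _ => e b) (fun c _ => e.symm c) <;>
    intros <;>
    simp_all [SimpleGraph.mem_neighborFinset, SimpleGraph.comap_adj]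

lemma comap_common {V W : Type*} [Fintype V] [Fintype W] [DecidableEq V] [DecidableEq W]
    (e : V ≃ W)
    (H : SimpleGraph W) (a b : V) :
    ((H.comap e).neighborFinset a ∩ (H.comap e).neighborFinset b).card
      = (H.neighborFinset (e a) ∩ H.neighborFinset (e b)).card := by
  apply Finset.card_bij' (fun c _ => e c) (fun c _ => e.symm c) <;>
    intros <;>
    simp_all [SimpleGraph.mem_neighborFinset, SimpleGraph.comap_adj]

lemma comap_colorable {V W : Type*} (e : V ≃ W) (H : SimpleGraph W) (m : ℕ)
    (h : H.Colorable m) : (H.comap e).Colorable m := by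
  obtain ⟨C⟩ := h
  exact ⟨SimpleGraph.Coloring.mk (fun v => C (e v)) (fun hadj => C.valid hadj)⟩

/-- The key abstract lemma: in a `C4`-free `n`-regular graph on sufficiently many
vertices, no vertex is a function of at most `k` other vertices when `n ≥ 2k+3`. -/
lemma func_lemma {V : Type*} [Fintype V] [DecidableEq V] (G : SimpleGraph V) (k n : ℕ)
    (hn : 2 * k + 3 ≤ n)
    (hC4 : ∀ a b : V, a ≠ b → (G.neighborFinset a ∩ G.neighborFinset b).card < 2)
    (hdeg : ∀ v, G.degree v = n)
    (hcard : n + 1 + k + k * n < Fintype.card V)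
    (x : V) (S : Finset V) (hS : S.card ≤ k) : ¬ IsFunctionOf G x S := by
  rintro ⟨hxS, f, hf⟩
  have hNx : (G.neighborFinset x).card = n := hdeg x
  have step1 : ∃ z ∈ G.neighborFinset x, z ∉ S ∧ ∀ s ∈ S, ¬ G.Adj z s := by
    set T := S ∪ S.biUnion (fun s => G.neighborFinset x ∩ G.neighborFinset s) with hT
    have hTcard : T.card ≤ k + k := by
      calc T.card ≤ S.card + (S.biUnion
            (fun s => G.neighborFinset x ∩ G.neighborFinset s)).card :=
          Finset.card_union_le _ _
      _ ≤ S.card + ∑ s ∈ S, (G.neighborFinset x ∩ G.neighborFinset s).card :=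
          add_le_add_right Finset.card_biUnion_le _
      _ ≤ k + ∑ s ∈ S, 1 := by
          apply add_le_add hS
          apply Finset.sum_le_sum
          intro s hs
          have hxs : x ≠ s := fun h => hxS (h ▸ hs)
          have := hC4 x s hxs
          omega
      _ = k + S.card := by rw [Finset.sum_const, smul_eq_mul, mul_one]
      _ ≤ k + k := add_le_add_right hS _
    have hsd : 0 < ((G.neighborFinset x) \ T).card := by
      have h1 : (G.neighborFinset x).card ≤ ((G.neighborFinset x) \ T).card + T.card :=
        Finset.card_le_card_sdiff_add_card
      omega
    obtain ⟨z, hz⟩ := Finset.card_pos.mp hsd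
    rw [Finset.mem_sdiff] at hz
    refine ⟨z, hz.1, fun h => hz.2 (Finset.mem_union_left _ h), fun s hs hadj => ?_⟩
    apply hz.2
    apply Finset.mem_union_right
    exact Finset.mem_biUnion.mpr ⟨s, hs, Finset.mem_inter.mpr ⟨hz.1,
      (SimpleGraph.mem_neighborFinset _ _ _).mpr hadj.symm⟩⟩
  obtain ⟨z, hzN, hzS, hztrace⟩ := step1
  have hxz : G.Adj x z := (SimpleGraph.mem_neighborFinset _ _ _).mp hzN
  have step3 : ∃ z', z' ≠ x ∧ z' ∉ S ∧ ¬ G.Adj x z' ∧ ∀ s ∈ S, ¬ G.Adj z' s := by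
    set Bad := insert x (S ∪ G.neighborFinset x ∪ S.biUnion (fun s => G.neighborFinset s))
      with hBadDef
    have hBad : Bad.card ≤ 1 + (k + n + k * n) := by
      calc Bad.card ≤ (S ∪ G.neighborFinset x ∪
            S.biUnion (fun s => G.neighborFinset s)).card + 1 := Finset.card_insert_le _ _
      _ ≤ ((S ∪ G.neighborFinset x).card +
            (S.biUnion (fun s => G.neighborFinset s)).card) + 1 := by
          have := Finset.card_union_le (S ∪ G.neighborFinset x)
            (S.biUnion (fun s => G.neighborFinset s))
          omega
      _ ≤ ((S.card + (G.neighborFinset x).card) +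
            ∑ s ∈ S, (G.neighborFinset s).card) + 1 := by
          have h1 := Finset.card_union_le S (G.neighborFinset x)
          have h2 := Finset.card_biUnion_le (s := S) (t := fun s => G.neighborFinset s)
          omega
      _ ≤ ((k + n) + ∑ s ∈ S, n) + 1 := by
          have h3 : ∑ s ∈ S, (G.neighborFinset s).card = ∑ s ∈ S, n :=
            Finset.sum_congr rfl (fun s _ => hdeg s)
          omega
      _ = ((k + n) + S.card * n) + 1 := by rw [Finset.sum_const, smul_eq_mul]
      _ ≤ 1 + (k + n + k * n) := by
          have : S.card * n ≤ k * n := Nat.mul_le_mul_right _ hS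
          omega
    have hsd : 0 < ((univ : Finset V) \ Bad).card := by
      have h1 : (univ : Finset V).card ≤ ((univ : Finset V) \ Bad).card + Bad.card :=
        Finset.card_le_card_sdiff_add_card
      have h2 : (univ : Finset V).card = Fintype.card V := Finset.card_univ
      omega
    obtain ⟨z', hz'⟩ := Finset.card_pos.mp hsd
    rw [Finset.mem_sdiff] at hz'
    have hz'b := hz'.2
    rw [hBadDef, Finset.mem_insert] at hz'b
    push_neg at hz'b
    obtain ⟨hz'x, hz'rest⟩ := hz'b
    rw [Finset.mem_union, Finset.mem_union] at hz'rest
    push_neg at hz'rest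
    obtain ⟨⟨hz'S, hz'Nx⟩, hz'bi⟩ := hz'rest
    refine ⟨z', hz'x, hz'S, fun h => hz'Nx ((SimpleGraph.mem_neighborFinset _ _ _).mpr h),
      fun s hs hadj => ?_⟩
    exact hz'bi (Finset.mem_biUnion.mpr ⟨s, hs,
      (SimpleGraph.mem_neighborFinset _ _ _).mpr hadj.symm⟩)
  obtain ⟨z', hz'x, hz'S, hxz', hz'trace⟩ := step3
  have h1 := hf z hxz.ne' hzS
  have h2 := hf z' hz'x hz'S
  have heq : (fun s : {y // y ∈ S} => G.Adj z (s : V))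
      = (fun s : {y // y ∈ S} => G.Adj z' (s : V)) := by
    funext s
    exact propext (iff_of_false (hztrace s s.2) (hz'trace s s.2))
  rw [heq] at h1
  exact hxz' (h2.mpr (h1.mp hxz))

/-- The equivalence used to transport the construction to `Fin (2 * n ^ n)`. -/
@[irreducible] noncomputable def eqv (n : ℕ) : Fin (2 * n ^ n) ≃ (ZMod (n ^ n) ⊕ ZMod (n ^ n)) :=
  Fintype.equivOfCardEq (by
    simp [Fintype.card_sum, ZMod.card]
    omega)

/-- The transported graph on `Fin (2 * n ^ n)`. -/
noncomputable def Gn (n : ℕ) : SimpleGraph (Fin (2 * n ^ n)) :=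
  (HG n).comap (eqv n)

lemma Gn_colorable (n : ℕ) : (Gn n).Colorable 2 :=
  comap_colorable _ _ _ (HG_colorable n)

lemma Gn_common (n : ℕ) : ∀ a b : Fin (2 * n ^ n), a ≠ b →
    ((Gn n).neighborFinset a ∩ (Gn n).neighborFinset b).card < 2 := by
  intro a b hab
  refine lt_of_le_of_lt (le_of_eq ?_)
    (HG_common n (eqv n a) (eqv n b) (fun h => hab ((eqv n).injective h)))
  exact comap_common (eqv n) (HG n) a b

lemma Gn_degree (n : ℕ) : ∀ v, (Gn n).degree v = n := by
  intro v
  exact (comap_degree (eqv n) (HG n) v).trans (HG_degree n (eqv n v))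

lemma Gn_func (k : ℕ) : ∀ x : Fin (2 * (2 * k + 3) ^ (2 * k + 3)),
    ∀ S : Finset (Fin (2 * (2 * k + 3) ^ (2 * k + 3))),
    S.card ≤ k → ¬ IsFunctionOf (Gn (2 * k + 3)) x S := by
  intro x S hS
  apply func_lemma _ k (2 * k + 3) le_rfl (Gn_common _) (Gn_degree _) ?_ x S hS
  rw [Fintype.card_fin]
  set n : ℕ := 2 * k + 3 with hn
  have h3 : n ^ 3 ≤ n ^ n := Nat.pow_le_pow_right (by omega) (by omega)
  have hk : k ≤ n := by omega
  nlinarith [sq_nonneg n, sq_nonneg k]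

end K22Aux

/-- There is a sequence of `K_{2,2}`-free bipartite graphs `G_n` with `2·n^n`
vertices in which every vertex has degree exactly `n`; consequently (for every `k`,
some `G_n` has every vertex of functionality greater than `k`, so) any hereditary
class containing all the `G_n` has unbounded functionality. -/
theorem exists_K22_free_regular_sequence :
    ∃ G : ∀ n : ℕ, SimpleGraph (Fin (2 * n ^ n)),
      (∀ n, 1 ≤ n →
        (G n).Colorable 2 ∧
        (∀ a b : Fin (2 * n ^ n), a ≠ b →
          ((G n).neighborFinset a ∩ (G n).neighborFinset b).card < 2) ∧
        (∀ v, (G n).degree v = n)) ∧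
      (∀ k : ℕ, ∃ n, ∀ x : Fin (2 * n ^ n), ∀ S : Finset (Fin (2 * n ^ n)),
        S.card ≤ k → ¬ IsFunctionOf (G n) x S) :=
  ⟨K22Aux.Gn,
    fun n _ => ⟨K22Aux.Gn_colorable n, K22Aux.Gn_common n, K22Aux.Gn_degree n⟩,
    fun k => ⟨2 * k + 3, K22Aux.Gn_func k⟩⟩
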